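/- Let n = 3^N · t where N ≥ 1 is odd and t ≥ 1 is not divisible by 3. Then a₆(n) = 0, i.e. ∑_{d | n, d odd, d > 0} ξ(2n/d − d) = 0. -/

import Mathlib

/-- `ξ m` for odd `m`, determined by the residue of `m` modulo 12. -/
def xi (m : ℤ) : ℤ :=
  if m % 12 = 1 ∨ m % 12 = 5 then -1
  else if m % 12 = 3 then -2
  else if m % 12 = 7 ∨ m % 12 = 11 then 1
  else if m % 12 = 9 then 2
  else 0

/-- `a₆ n = ∑ ξ(2n/d − d)` over odd positive divisors `d` of `n`. -/
def a6 (n : ℕ) : ℤ :=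
  ∑ d ∈ n.divisors.filter (fun d => Odd d), xi (2 * ((n : ℤ) / (d : ℤ)) - (d : ℤ))

lemma xi_add_xi (m m' : ℤ) (hm : m % 2 = 1) (hm' : m' % 2 = 1)
    (h4 : (m + m') % 4 = 0) (h3 : m % 3 = 0 ↔ m' % 3 = 0) :
    xi m + xi m' = 0 := by
  unfold xi; split_ifs <;> omega

lemma padic_mul_pow (k e : ℕ) (he : ¬ 3 ∣ e) (he0 : e ≠ 0) :
    padicValNat 3 (3 ^ k * e) = k := by
  haveI : Fact (Nat.Prime 3) := ⟨by norm_num⟩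
  rw [padicValNat.mul (pow_ne_zero k (by norm_num)) he0, padicValNat.prime_pow,
    padicValNat.eq_zero_of_not_dvd he, add_zero]

lemma divisor_structure (N t d : ℕ) (h3 : ¬ 3 ∣ t) (hdvd : d ∣ 3 ^ N * t) (hd0 : d ≠ 0) :
    ∃ v e, padicValNat 3 d = v ∧ v ≤ N ∧ d = 3 ^ v * e ∧ e ∣ t ∧ ¬ 3 ∣ e ∧ e ≠ 0 := by
  haveI : Fact (Nat.Prime 3) := ⟨by norm_num⟩
  set v := padicValNat 3 d with hv
  obtain ⟨e, he⟩ : 3 ^ v ∣ d := pow_padicValNat_dvd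
  have he0 : e ≠ 0 := by rintro rfl; rw [mul_zero] at he; exact hd0 he
  have h3e : ¬ 3 ∣ e := by
    rintro ⟨c, hc⟩
    have hdd : 3 ^ (v + 1) ∣ d := ⟨c, by rw [he, hc]; ring⟩
    exact pow_succ_padicValNat_not_dvd (p := 3) hd0 hdd
  have hcop : Nat.Coprime 3 e := (Nat.Prime.coprime_iff_not_dvd (by norm_num)).mpr h3e
  have hev : e ∣ t := by
    have h1 : e ∣ 3 ^ N * t := dvd_trans ⟨3 ^ v, by rw [he]; ring⟩ hdvd
    exact (Nat.Coprime.pow_right N hcop.symm).dvd_of_dvd_mul_left h1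
  have hvN : v ≤ N := by
    have h2 : (3:ℕ) ^ v ∣ 3 ^ N * t := dvd_trans ⟨e, he⟩ hdvd
    have h3' : (3:ℕ) ^ v ∣ 3 ^ N :=
      (Nat.Coprime.pow_left v ((Nat.Prime.coprime_iff_not_dvd (by norm_num)).mpr h3)).dvd_of_dvd_mul_right h2
    exact (Nat.pow_dvd_pow_iff_le_right (by norm_num)).mp h3'
  exact ⟨v, e, rfl, hvN, he, hev, h3e, he0⟩

lemma arith4 (a b : ℕ) (hab : Odd (a + b)) (e u : ℤ) :
    ((2 * 3 ^ b * u - 3 ^ a * e) + (2 * 3 ^ a * u - 3 ^ b * e)) % 4 = 0 := by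
  have h4 : (4:ℤ) ∣ 3 ^ a + 3 ^ b := by
    have hz : ((3 ^ a + 3 ^ b : ℤ) : ZMod 4) = 0 := by
      push_cast
      have h3 : (3 : ZMod 4) = -1 := by decide
      rw [h3]
      rcases Nat.even_or_odd a with ha | ha
      · have hb : Odd b := by
          rcases ha with ⟨j, hj⟩; rcases hab with ⟨k, hk⟩; exact ⟨k - j, by omega⟩
        rw [ha.neg_one_pow, hb.neg_one_pow]; ring
      · have hb : Even b := by
          rcases ha with ⟨j, hj⟩; rcases hab with ⟨k, hk⟩; exact ⟨k - j, by omega⟩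
        rw [ha.neg_one_pow, hb.neg_one_pow]; ring
    exact (ZMod.intCast_zmod_eq_zero_iff_dvd _ 4).mp hz
  have heq : (2 * 3 ^ b * u - 3 ^ a * e) + (2 * 3 ^ a * u - 3 ^ b * e)
      = (3 ^ a + 3 ^ b) * (2 * u - e) := by ring
  rw [heq]
  exact Int.emod_eq_zero_of_dvd (h4.mul_right _)

lemma arith3' (a b : ℕ) (hab : 1 ≤ a + b) (e u : ℤ) (he : ¬ (3:ℤ) ∣ e) (hu : ¬ (3:ℤ) ∣ u) :
    (3:ℤ) ∣ (2 * 3 ^ b * u - 3 ^ a * e) ↔ (1 ≤ a ∧ 1 ≤ b) := by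
  have hp : Prime (3:ℤ) := Int.prime_three
  rcases Nat.eq_zero_or_pos a with rfl | ha
  · have hb : 1 ≤ b := by omega
    have h1 : (3:ℤ) ∣ 2 * 3 ^ b * u := by
      exact Dvd.dvd.mul_right (Dvd.dvd.mul_left (dvd_pow_self 3 (by omega)) 2) u
    simp only [pow_zero, one_mul]
    rw [dvd_sub_right h1]
    constructor
    · intro h; exact absurd h he
    · rintro ⟨h, _⟩; omega
  rcases Nat.eq_zero_or_pos b with rfl | hb
  · have h1 : (3:ℤ) ∣ 3 ^ a * e := Dvd.dvd.mul_right (dvd_pow_self 3 (by omega)) e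
    simp only [pow_zero, one_mul]
    rw [dvd_sub_left h1]
    constructor
    · intro h
      rcases hp.dvd_mul.mp h with h2 | h2
      · norm_num at h2
      · exact absurd h2 hu
    · rintro ⟨_, h⟩; omega
  · constructor
    · intro _; exact ⟨ha, hb⟩
    · intro _
      have h1 : (3:ℤ) ∣ 2 * 3 ^ b * u :=
        Dvd.dvd.mul_right (Dvd.dvd.mul_left (dvd_pow_self 3 (by omega)) 2) u
      have h2 : (3:ℤ) ∣ 3 ^ a * e := Dvd.dvd.mul_right (dvd_pow_self 3 (by omega)) e
      exact dvd_sub h1 h2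

theorem a6_eq_zero_of_odd_three_adic_val (N t : ℕ) (hN : Odd N) (hN1 : 1 ≤ N)
    (ht : 1 ≤ t) (h3 : ¬ (3 ∣ t)) :
    a6 (3 ^ N * t) = 0 := by
  haveI : Fact (Nat.Prime 3) := ⟨by norm_num⟩
  unfold a6
  have hn0 : 3 ^ N * t ≠ 0 := by positivity
  have spec : ∀ d ∈ (3 ^ N * t).divisors.filter (fun d => Odd d),
      ∃ v e u, padicValNat 3 d = v ∧ v ≤ N ∧ d = 3 ^ v * e ∧ t = e * u ∧
        ¬ 3 ∣ e ∧ ¬ 3 ∣ u ∧ Odd e ∧ e ≠ 0 ∧ u ≠ 0 := by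
    intro d hd
    rw [Finset.mem_filter, Nat.mem_divisors] at hd
    obtain ⟨⟨hdvd, _⟩, hodd⟩ := hd
    have hd0 : d ≠ 0 := by rintro rfl; simp at hodd
    obtain ⟨v, e, hv, hvN, hde, hev, h3e, he0⟩ := divisor_structure N t d h3 hdvd hd0
    obtain ⟨u, hu⟩ := hev
    refine ⟨v, e, u, hv, hvN, hde, hu, h3e, ?_, ?_, he0, ?_⟩
    · intro hdu; exact h3 (hu ▸ Dvd.dvd.mul_left hdu e)
    · rw [hde] at hodd; exact (Nat.odd_mul.mp hodd).2
    · rintro rfl; rw [mul_zero] at hu; omega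
  refine Finset.sum_involution
    (fun d _ => 3 ^ (N - padicValNat 3 d) * (d / 3 ^ (padicValNat 3 d))) ?_ ?_ ?_ ?_
  · -- sums to zero
    intro d hd
    obtain ⟨v, e, u, hv, hvN, hde, hu, h3e, h3u, hoe, he0, hu0⟩ := spec d hd
    have hgd : (3 ^ (N - padicValNat 3 d) * (d / 3 ^ (padicValNat 3 d))) = 3 ^ (N - v) * e := by
      rw [hv, hde, Nat.mul_div_cancel_left e (pow_pos (by norm_num) v)]
    have hnd : (3 ^ N * t) / d = 3 ^ (N - v) * u := by
      have hp3 : (3:ℕ) ^ N = 3 ^ v * 3 ^ (N - v) := by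
        rw [← pow_add]; congr 1; omega
      have hsplit : 3 ^ N * t = d * (3 ^ (N - v) * u) := by
        rw [hde, hu, hp3]; ring
      have hdpos : 0 < d := by
        rw [hde]; exact Nat.mul_pos (pow_pos (by norm_num) v) (Nat.pos_of_ne_zero he0)
      rw [hsplit, Nat.mul_div_cancel_left _ hdpos]
    have hnd' : (3 ^ N * t) / (3 ^ (N - v) * e) = 3 ^ v * u := by
      have hp3 : (3:ℕ) ^ N = 3 ^ v * 3 ^ (N - v) := by
        rw [← pow_add]; congr 1; omega
      have hsplit : 3 ^ N * t = (3 ^ (N - v) * e) * (3 ^ v * u) := by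
        rw [hu, hp3]; ring
      rw [hsplit, Nat.mul_div_cancel_left _ (by positivity)]
    have hfd : 2 * (((3 ^ N * t : ℕ) : ℤ) / (d : ℤ)) - (d : ℤ)
        = 2 * 3 ^ (N - v) * (u : ℤ) - 3 ^ v * (e : ℤ) := by
      rw [← Int.natCast_ediv, hnd, hde]; push_cast; ring
    have hfd' : 2 * (((3 ^ N * t : ℕ) : ℤ) / ((3 ^ (N - v) * e : ℕ) : ℤ)) - ((3 ^ (N - v) * e : ℕ) : ℤ)
        = 2 * 3 ^ v * (u : ℤ) - 3 ^ (N - v) * (e : ℤ) := by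
      rw [← Int.natCast_ediv, hnd']; push_cast; ring
    simp only [hgd]
    push_cast at hfd hfd' ⊢
    rw [hfd, hfd']
    have hez : ¬ (3:ℤ) ∣ (e : ℤ) := by exact_mod_cast h3e
    have huz : ¬ (3:ℤ) ∣ (u : ℤ) := by exact_mod_cast h3u
    have hoez : Odd (e : ℤ) := by exact_mod_cast hoe
    have h3pow : ∀ k : ℕ, Odd ((3:ℤ) ^ k) := fun k => Odd.pow ⟨1, by ring⟩
    have hoddN : Odd (v + (N - v)) := by
      rw [show v + (N - v) = N by omega]; exact hN
    refine xi_add_xi _ _ ?_ ?_ ?_ ?_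
    · exact Int.odd_iff.mp ((Even.sub_odd ⟨3 ^ (N - v) * (u:ℤ), by ring⟩ ((h3pow v).mul hoez)))
    · exact Int.odd_iff.mp ((Even.sub_odd ⟨3 ^ v * (u:ℤ), by ring⟩ ((h3pow (N - v)).mul hoez)))
    · exact arith4 v (N - v) hoddN (e : ℤ) (u : ℤ)
    · have i1 := arith3' v (N - v) (by omega) (e : ℤ) (u : ℤ) hez huz
      have i2 := arith3' (N - v) v (by omega) (e : ℤ) (u : ℤ) hez huz
      constructor
      · intro hm
        have h := i1.mp (Int.dvd_of_emod_eq_zero hm)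
        exact Int.emod_eq_zero_of_dvd (i2.mpr ⟨h.2, h.1⟩)
      · intro hm
        have h := i2.mp (Int.dvd_of_emod_eq_zero hm)
        exact Int.emod_eq_zero_of_dvd (i1.mpr ⟨h.2, h.1⟩)
  · -- g d ≠ d
    intro d hd _
    obtain ⟨v, e, u, hv, hvN, hde, hu, h3e, h3u, hoe, he0, hu0⟩ := spec d hd
    have hgd : (3 ^ (N - padicValNat 3 d) * (d / 3 ^ (padicValNat 3 d))) = 3 ^ (N - v) * e := by
      rw [hv, hde, Nat.mul_div_cancel_left e (pow_pos (by norm_num) v)]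
    simp only [hgd]
    intro heq
    rw [hde] at heq
    have h1 : (3:ℕ) ^ (N - v) = 3 ^ v :=
      Nat.eq_of_mul_eq_mul_right (Nat.pos_of_ne_zero he0) heq
    have h2 : N - v = v := Nat.pow_right_injective (by norm_num) h1
    obtain ⟨k, hk⟩ := hN
    omega
  · -- g d ∈ s
    intro d hd
    obtain ⟨v, e, u, hv, hvN, hde, hu, h3e, h3u, hoe, he0, hu0⟩ := spec d hd
    have hgd : (3 ^ (N - padicValNat 3 d) * (d / 3 ^ (padicValNat 3 d))) = 3 ^ (N - v) * e := by
      rw [hv, hde, Nat.mul_div_cancel_left e (pow_pos (by norm_num) v)]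
    simp only [hgd, Finset.mem_filter, Nat.mem_divisors]
    refine ⟨⟨mul_dvd_mul (pow_dvd_pow 3 (Nat.sub_le N v)) ⟨u, hu⟩, hn0⟩, ?_⟩
    exact (Odd.pow ⟨1, by norm_num⟩).mul hoe
  · -- involution
    intro d hd
    obtain ⟨v, e, u, hv, hvN, hde, hu, h3e, h3u, hoe, he0, hu0⟩ := spec d hd
    have hgd : (3 ^ (N - padicValNat 3 d) * (d / 3 ^ (padicValNat 3 d))) = 3 ^ (N - v) * e := by
      rw [hv, hde, Nat.mul_div_cancel_left e (pow_pos (by norm_num) v)]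
    simp only [hgd]
    have hv2 : padicValNat 3 (3 ^ (N - v) * e) = N - v := padic_mul_pow _ _ h3e he0
    rw [hv2, Nat.mul_div_cancel_left e (pow_pos (by norm_num) (N - v)),
      show N - (N - v) = v by omega, ← hde]
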